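/- For every natural number t ≥ 0, the t-th power of the matrix product T·R⁻¹ satisfies the closed form (T·R⁻¹)^t = I + t·Q + t²·N', where Q = [[-3/2,-1/2,1/2],[-3,1,1],[-3/2,-5/2,1/2]] and N' = [[3/2,-1/2,-1/2],[0,0,0],[9/2,-3/2,-3/2]]. -/
import Mathlib


open Matrix

/-- The matrix `R`. -/
def R : Matrix (Fin 3) (Fin 3) ℝ := !![0,0,-1; 1,0,-1; 0,1,-1]

/-- The matrix `T`. -/
def T : Matrix (Fin 3) (Fin 3) ℝ := !![-1,0,0; 2,1,0; -4,0,1]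

/-- `Q = log(T·R⁻¹)`. -/
noncomputable def Q : Matrix (Fin 3) (Fin 3) ℝ := !![-3/2,-1/2,1/2; -3,1,1; -3/2,-5/2,1/2]

/-- `N' = Q²/2`. -/
noncomputable def N' : Matrix (Fin 3) (Fin 3) ℝ := !![3/2,-1/2,-1/2; 0,0,0; 9/2,-3/2,-3/2]

def M : Matrix (Fin 3) (Fin 3) ℝ := !![1,-1,0; -3,2,1; 3,-4,0]

lemma Rinv : R⁻¹ = !![-1,1,0; -1,0,1; -1,0,0] := by
  apply inv_eq_right_inv
  rw [R]
  norm_num [Matrix.mul_fin_three]; exact (Matrix.one_fin_three).symm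

lemma TRinv : T * R⁻¹ = M := by
  rw [Rinv, T, M]
  norm_num [Matrix.mul_fin_three]

/-- Closed form for the powers of `T·R⁻¹`: `(T·R⁻¹)^t = I + t·Q + t²·N'`. -/
theorem TRinv_pow (t : ℕ) :
    (T * R⁻¹) ^ t = 1 + (t : ℝ) • Q + ((t : ℝ) ^ 2) • N' := by
  rw [TRinv]
  induction t with
  | zero => simp
  | succ n ih =>
    rw [pow_succ, ih]
    ext i j
    fin_cases i <;> fin_cases j <;>
      simp [M, Q, N', Matrix.mul_apply, Fin.sum_univ_succ, Matrix.one_apply] <;>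
      ring
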